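/- Let T : [0,1] → [0,1] be a map and I ⊆ [0,1] a set disjoint from T([0,1]). Then for every x ∈ [0,1] and every n ≥ 0, the ω-limit set of x under T is disjoint from the interior of T^n(I), where the ω-limit set is the set of all limit points of the sequence (T^k(x))_{k≥0}. -/
import Mathlib


/-- If `T : [0,1] → [0,1]` is injective and `I` is disjoint from the image of `T`,
then for every `x` and `n ≥ 0`, the ω-limit set of `x` under `T` (the set of all
limit points of the orbit) is disjoint from the interior of `T^n(I)`. -/
theorem stmt11 (T : Set.Icc (0:ℝ) 1 → Set.Icc (0:ℝ) 1)
    (hinj : Function.Injective T)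
    (I : Set (Set.Icc (0:ℝ) 1)) (hI : Disjoint I (Set.range T)) :
    ∀ x : Set.Icc (0:ℝ) 1, ∀ n : ℕ,
      Disjoint (⋂ N : ℕ, closure {y | ∃ k ≥ N, T^[k] x = y})
        (interior (T^[n] '' I)) := by
  intro x n
  have key : Disjoint {y | ∃ k ≥ n + 1, T^[k] x = y} (T^[n] '' I) := by
    rw [Set.disjoint_left]
    rintro y ⟨k, hk, rfl⟩ ⟨i, hiI, hiy⟩
    have h1 : T^[n] (T^[k - n] x) = T^[n] i := by
      rw [← Function.iterate_add_apply]
      rw [show n + (k - n) = k by omega]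
      exact hiy.symm
    have h2 : T^[k - n] x = i := (hinj.iterate n) h1
    have h3 : T^[k - n] x ∈ Set.range T := by
      refine ⟨T^[k - n - 1] x, ?_⟩
      rw [show k - n = (k - n - 1) + 1 by omega, Function.iterate_succ_apply']
      simp
    exact Set.disjoint_left.mp hI (h2 ▸ hiI) h3
  rw [Set.disjoint_left]
  intro y hy hyint
  have hy' : y ∈ closure {y | ∃ k ≥ n + 1, T^[k] x = y} :=
    Set.mem_iInter.mp hy (n + 1)
  obtain ⟨z, hz1, hz2⟩ :=
    mem_closure_iff.mp hy' (interior (T^[n] '' I)) isOpen_interior hyint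
  exact Set.disjoint_left.mp key hz2 (interior_subset hz1)
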